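/- The partial derivative of G_H(x, x₀) with respect to y₀ equals −(1/(4L))·Im(cot((π/(2L))(z − z₀)) + cot((π/(2L))(z − z₀'))), where z = x + iy, z₀ = x₀ + iy₀, z₀' = x₀ − iy₀. -/

import Mathlib

open Real

lemma log_abs_hasDerivAt {F : ℝ → ℂ} {F' : ℂ} {t : ℝ}
    (hF : HasDerivAt F F' t) (h0 : F t ≠ 0) :
    HasDerivAt (fun s => Real.log ‖F s‖) ((F' / F t).re) t := by
  have hu : HasDerivAt (fun s => (F s).re) F'.re t :=
    Complex.reCLM.hasFDerivAt.comp_hasDerivAt t hF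
  have hv : HasDerivAt (fun s => (F s).im) F'.im t :=
    Complex.imCLM.hasFDerivAt.comp_hasDerivAt t hF
  have hns : HasDerivAt (fun s => Complex.normSq (F s))
      (2 * (F t).re * F'.re + 2 * (F t).im * F'.im) t := by
    have h2 := (hu.mul hu).add (hv.mul hv)
    have heq2 : (fun s => Complex.normSq (F s))
        = fun s => (F s).re * (F s).re + (F s).im * (F s).im := by
      funext s; simp [Complex.normSq_apply]
    rw [heq2]
    refine h2.congr_deriv (Eq.symm ?_)
    ring
  have hpos : 0 < Complex.normSq (F t) := Complex.normSq_pos.mpr h0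
  have hlog : HasDerivAt (fun s => Real.log (Complex.normSq (F s)))
      ((Complex.normSq (F t))⁻¹ * (2 * (F t).re * F'.re + 2 * (F t).im * F'.im)) t :=
    by have := (Real.hasDerivAt_log hpos.ne').comp t hns; exact this
  have heq : (fun s => Real.log ‖F s‖)
      = fun s => (1/2) * Real.log (Complex.normSq (F s)) := by
    funext s
    rw [Complex.norm_def, Real.log_sqrt (Complex.normSq_nonneg _)]
    ring
  rw [heq]
  have h3 := hlog.const_mul (1/2 : ℝ)
  refine h3.congr_deriv (Eq.symm ?_)
  rw [Complex.div_re]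
  field_simp

lemma sin_comp_hasDerivAt {f : ℝ → ℂ} {f' : ℂ} {t : ℝ} (hf : HasDerivAt f f' t) :
    HasDerivAt (fun s => Complex.sin (f s)) (f' * Complex.cos (f t)) t := by
  have h := ((Complex.hasDerivAt_sin (f t)).hasFDerivAt.restrictScalars ℝ).comp_hasDerivAt t hf
  exact h

/-- Derivative of the periodic half-plane Green's function with respect to `y₀`:
`∂G_H/∂y₀ = -(1/(4L)) Im( cot((π/(2L))(z - z₀)) + cot((π/(2L))(z - z₀')) )`. -/
theorem stmt_4 (L : ℝ) (hL : 0 < L) (x y x₀ y₀ : ℝ) (hy : 0 < y) (hy₀ : 0 < y₀)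
    (hne : (x, y) ≠ (x₀, y₀))
    (z z₀ z₀' : ℂ)
    (hz : z = (x : ℂ) + y * Complex.I)
    (hz₀ : z₀ = (x₀ : ℂ) + y₀ * Complex.I)
    (hz₀' : z₀' = (x₀ : ℂ) - y₀ * Complex.I)
    (hs : Complex.sin ((π / (2 * L)) * (z - z₀)) ≠ 0)
    (hs' : Complex.sin ((π / (2 * L)) * (z - z₀')) ≠ 0)
    (GH : ℝ → ℝ)
    (hGH : ∀ t : ℝ, GH t =
      -(1 / (2 * π)) * (Real.log (2 * ‖Complex.sin ((π / (2 * L)) *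
            (z - ((x₀ : ℂ) + t * Complex.I)))‖)
        - Real.log (2 * ‖Complex.sin ((π / (2 * L)) *
            (z - ((x₀ : ℂ) - t * Complex.I)))‖))) :
    HasDerivAt GH
      (-(1 / (4 * L)) * (Complex.cot ((π / (2 * L)) * (z - z₀))
        + Complex.cot ((π / (2 * L)) * (z - z₀'))).im) y₀ := by
  set a : ℂ := ((π : ℂ) / (2 * (L : ℂ))) with ha
  set F₁ : ℝ → ℂ := fun t => 2 * Complex.sin (a * (z - ((x₀ : ℂ) + t * Complex.I))) with hF₁def
  set F₂ : ℝ → ℂ := fun t => 2 * Complex.sin (a * (z - ((x₀ : ℂ) - t * Complex.I))) with hF₂def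
  have hzz₀ : (x₀ : ℂ) + (y₀ : ℂ) * Complex.I = z₀ := hz₀.symm
  have hzz₀' : (x₀ : ℂ) - (y₀ : ℂ) * Complex.I = z₀' := hz₀'.symm
  -- derivative of the inner affine maps
  have hid : HasDerivAt (fun t : ℝ => (t : ℂ)) 1 y₀ := by
    exact Complex.ofRealCLM.hasDerivAt (x := y₀)
  have hti : HasDerivAt (fun t : ℝ => (t : ℂ) * Complex.I) Complex.I y₀ := by
    simpa using hid.mul_const Complex.I
  have hg₁ : HasDerivAt (fun t : ℝ => a * (z - ((x₀ : ℂ) + t * Complex.I)))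
      (a * -Complex.I) y₀ := ((hti.const_add (x₀ : ℂ)).const_sub z).const_mul a
  have hg₂ : HasDerivAt (fun t : ℝ => a * (z - ((x₀ : ℂ) - t * Complex.I)))
      (a * Complex.I) y₀ := by
    have h1 : HasDerivAt (fun t : ℝ => (x₀ : ℂ) - t * Complex.I) (-Complex.I) y₀ :=
      hti.const_sub (x₀ : ℂ)
    have h2 : HasDerivAt (fun t : ℝ => z - ((x₀ : ℂ) - t * Complex.I)) Complex.I y₀ := by
      simpa using h1.const_sub z
    exact h2.const_mul a
  have hF₁ : HasDerivAt F₁ (2 * ((a * -Complex.I) * Complex.cos (a * (z - z₀)))) y₀ := by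
    have := (sin_comp_hasDerivAt hg₁).const_mul (2 : ℂ)
    simpa [hzz₀] using this
  have hF₂ : HasDerivAt F₂ (2 * ((a * Complex.I) * Complex.cos (a * (z - z₀')))) y₀ := by
    have := (sin_comp_hasDerivAt hg₂).const_mul (2 : ℂ)
    simpa [hzz₀'] using this
  have h0₁ : F₁ y₀ ≠ 0 := by
    simp only [hF₁def, hzz₀]
    exact mul_ne_zero two_ne_zero hs
  have h0₂ : F₂ y₀ ≠ 0 := by
    simp only [hF₂def, hzz₀']
    exact mul_ne_zero two_ne_zero hs'
  have hL₁ := log_abs_hasDerivAt hF₁ h0₁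
  have hL₂ := log_abs_hasDerivAt hF₂ h0₂
  have hGHeq : GH = fun t => -(1 / (2 * π)) *
      (Real.log ‖F₁ t‖ - Real.log ‖F₂ t‖) := by
    funext t
    rw [hGH t]
    simp [hF₁def, hF₂def, norm_mul, Complex.norm_two]
  rw [hGHeq]
  have hmain := (hL₁.sub hL₂).const_mul (-(1 / (2 * π)))
  refine hmain.congr_deriv (Eq.symm ?_)
  -- now compute the derivative value
  have hF₁v : F₁ y₀ = 2 * Complex.sin (a * (z - z₀)) := by simp [hF₁def, hzz₀]
  have hF₂v : F₂ y₀ = 2 * Complex.sin (a * (z - z₀')) := by simp [hF₂def, hzz₀']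
  have hq₁ : (2 * ((a * -Complex.I) * Complex.cos (a * (z - z₀)))) / F₁ y₀
      = -(a * Complex.I * Complex.cot (a * (z - z₀))) := by
    rw [hF₁v, Complex.cot_eq_cos_div_sin]
    field_simp
  have hq₂ : (2 * ((a * Complex.I) * Complex.cos (a * (z - z₀')))) / F₂ y₀
      = a * Complex.I * Complex.cot (a * (z - z₀')) := by
    rw [hF₂v, Complex.cot_eq_cos_div_sin]
    field_simp
  rw [hq₁, hq₂]
  have haRe : a = ((π / (2 * L) : ℝ) : ℂ) := by push_cast [ha]; ring
  have hre : ∀ w : ℂ, (a * Complex.I * w).re = -(π / (2 * L)) * w.im := by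
    intro w
    rw [haRe, mul_assoc, Complex.re_ofReal_mul]
    simp [Complex.mul_re]
  rw [hre, Complex.neg_re, hre]
  have hπ : (π : ℝ) ≠ 0 := Real.pi_ne_zero
  simp only [Complex.add_im]
  field_simp
  ring
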